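/- Let K ⊆ X be compact and η ∈ G₂. Then for ν-almost every orbit C having non-empty intersection with K ∩ Kη⁻¹: (a) the restrictions to K ∩ Kη⁻¹ of the measure μ_C and of its translate R_ημ_C are equivalent (mutually absolutely continuous); (b) the Radon–Nikodym derivative of R_ημ_C with respect to μ_C coincides, μ_C-almost everywhere on C ∩ K ∩ Kη⁻¹, with the Radon–Nikodym derivative λ(·,η) = d(R_ημ)/dμ. -/

import Mathlib

open MeasureTheory Set
open scoped ENNReal Pointwise

lemma countable_generatePiSystem'' {α : Type*} {S : Set (Set α)} (hS : S.Countable) :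
    (generatePiSystem S).Countable := by
  have h : generatePiSystem S ⊆ sInter '' {t | t.Finite ∧ t ⊆ S} := by
    intro s hs
    induction hs with
    | base h => exact ⟨{_}, ⟨finite_singleton _, singleton_subset_iff.2 h⟩, sInter_singleton _⟩
    | inter _ _ _ ih1 ih2 =>
        obtain ⟨t1, ⟨hf1, hs1⟩, rfl⟩ := ih1
        obtain ⟨t2, ⟨hf2, hs2⟩, rfl⟩ := ih2
        exact ⟨t1 ∪ t2, ⟨hf1.union hf2, union_subset hs1 hs2⟩, sInter_union _ _⟩
  exact ((countable_setOf_finite_subset hS).image _).mono h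


theorem stmt7
    {G : Type*} [Group G] [TopologicalSpace G] [IsTopologicalGroup G]
    [LocallyCompactSpace G] [SecondCountableTopology G] [T2Space G]
    (G₁ G₂ : Subgroup G) (hG₁ : IsClosed (G₁ : Set G)) (hG₂ : IsClosed (G₂ : Set G))
    {X : Type*} [TopologicalSpace X] [TopologicalSpace.MetrizableSpace X]
    [LocallyCompactSpace X] [SecondCountableTopology X]
    [MeasurableSpace X] [BorelSpace X]
    (π : G → X) (hπc : Continuous π) (hπo : IsOpenMap π) (hπs : Function.Surjective π)
    (act : X → G → X) (hactc : Continuous fun q : X × G => act q.1 q.2)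
    (hact1 : ∀ x : X, act x 1 = x)
    (hactm : ∀ (x : X) (g g' : G), act (act x g) g' = act x (g * g'))
    (hπact : ∀ g g' : G, π (g * g') = act (π g) g')
    (hπker : ∀ g g' : G, π g = π g' ↔ ∃ h ∈ G₁, g' = h * g)
    (μ : Measure X) [SigmaFinite μ] [μ.Regular] (hμ : μ ≠ 0)
    (hqi : ∀ g : G, μ.map (fun x => act x (g⁻¹)) ≪ μ ∧ μ ≪ μ.map (fun x => act x (g⁻¹)))
    {Q : Type*} [MeasurableSpace Q]
    (p : X → Q) (hps : Function.Surjective p)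
    (hporb : ∀ x y : X, p x = p y ↔ ∃ η ∈ G₂, act x η = y)
    (hQσ : ∀ E : Set Q, MeasurableSet E ↔ MeasurableSet (p ⁻¹' E))
    (μ' : Measure X) [IsFiniteMeasure μ'] (hμ'₁ : μ' ≪ μ) (hμ'₂ : μ ≪ μ')
    (ν : Measure Q) (hν : ν = μ'.map p)
    (μC : Q → Measure X)
    (hconc : ∀ c : Q, μC c ((p ⁻¹' {c})ᶜ) = 0)
    (hdis : ∀ g : X → ℂ, Integrable g μ →
      (∀ᵐ c ∂ν, Integrable g (μC c)) ∧
      Integrable (fun c => ∫ x, g x ∂(μC c)) ν ∧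
      ∫ c, (∫ x, g x ∂(μC c)) ∂ν = ∫ x, g x ∂μ)
    :
    ∀ K : Set X, IsCompact K → ∀ η ∈ G₂,
      ∀ᵐ c ∂ν,
        (p ⁻¹' {c} ∩ (K ∩ (fun x => act x η) ⁻¹' K)).Nonempty →
          (((μC c).map (fun x => act x (η⁻¹))).restrict (K ∩ (fun x => act x η) ⁻¹' K)
              ≪ (μC c).restrict (K ∩ (fun x => act x η) ⁻¹' K) ∧
            (μC c).restrict (K ∩ (fun x => act x η) ⁻¹' K)
              ≪ ((μC c).map (fun x => act x (η⁻¹))).restrict (K ∩ (fun x => act x η) ⁻¹' K)) ∧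
          ∀ᵐ x ∂((μC c).restrict (K ∩ (fun x => act x η) ⁻¹' K)),
            ((μC c).map (fun x => act x (η⁻¹))).rnDeriv (μC c) x
              = (μ.map (fun x => act x (η⁻¹))).rnDeriv μ x := by
  intro K hK η hη
  have hp_meas : Measurable p := fun E hE => (hQσ E).1 hE
  haveI : IsFiniteMeasure ν := by
    refine ⟨?_⟩
    rw [hν, Measure.map_apply hp_meas MeasurableSet.univ]
    exact measure_lt_top μ' _
  haveI : T2Space X := inferInstance
  set f : X → X := fun x => act x η⁻¹ with hf_def
  set fi : X → X := fun x => act x η with hfi_def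
  have hfc : Continuous f := hactc.comp (continuous_id.prodMk continuous_const)
  have hfic : Continuous fi := hactc.comp (continuous_id.prodMk continuous_const)
  have hfm : Measurable f := hfc.measurable
  have hfim : Measurable fi := hfic.measurable
  have hfif : ∀ x, fi (f x) = x := fun x => by
    simp only [hf_def, hfi_def, hactm, inv_mul_cancel, hact1]
  have hffi : ∀ x, f (fi x) = x := fun x => by
    simp only [hf_def, hfi_def, hactm, mul_inv_cancel, hact1]
  have hpf : ∀ x, p (f x) = p x := fun x => (hporb (f x) x).2 ⟨η, hη, hfif x⟩
  have hpfpre : ∀ S : Set Q, f ⁻¹' (p ⁻¹' S) = p ⁻¹' S := by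
    intro S; ext x; simp [hpf x]
  set A : Set X := K ∩ fi ⁻¹' K with hA_def
  have hKm : MeasurableSet K := hK.isClosed.measurableSet
  have hA : MeasurableSet A := hKm.inter (hfim hKm)
  have hμK : μ K < ∞ := hK.measure_lt_top
  have hfiA : f ⁻¹' A ⊆ K := by
    intro x hx
    have h2 : fi (f x) ∈ K := hx.2
    rwa [hfif x] at h2
  -- σ-finiteness of μ.map f
  have hsig_map : ∀ (m : Measure X), (∀ n, m (MeasureTheory.spanningSets μ n) < ∞) →
      SigmaFinite (m.map f) := by
    intro m hm
    refine ⟨⟨⟨fun n => fi ⁻¹' (MeasureTheory.spanningSets μ n), fun _ => trivial, fun n => ?_, ?_⟩⟩⟩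
    · rw [Measure.map_apply hfm (hfim (MeasureTheory.measurableSet_spanningSets μ n))]
      have : f ⁻¹' (fi ⁻¹' MeasureTheory.spanningSets μ n) = MeasureTheory.spanningSets μ n := by
        ext x; simp [hfif x]
      rw [this]; exact hm n
    · rw [← preimage_iUnion, MeasureTheory.iUnion_spanningSets, preimage_univ]
  have hsig_self : ∀ (m : Measure X), (∀ n, m (MeasureTheory.spanningSets μ n) < ∞) →
      SigmaFinite m := by
    intro m hm
    exact ⟨⟨⟨fun n => MeasureTheory.spanningSets μ n, fun _ => trivial, hm,
      MeasureTheory.iUnion_spanningSets μ⟩⟩⟩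
  haveI : SigmaFinite (μ.map f) :=
    hsig_map μ (fun n => MeasureTheory.measure_spanningSets_lt_top μ n)
  set lam : X → ℝ≥0∞ := (μ.map f).rnDeriv μ with hlam_def
  have hlm : Measurable lam := Measure.measurable_rnDeriv _ _
  have habs : μ.map f ≪ μ := (hqi η).1
  have habs2 : μ ≪ μ.map f := (hqi η).2
  have hwd : μ.withDensity lam = μ.map f := Measure.withDensity_rnDeriv_eq _ _ habs
  have hlfin : ∀ᵐ x ∂μ, lam x < ∞ := Measure.rnDeriv_lt_top _ _
  set N : Set X := lam ⁻¹' {0} ∪ lam ⁻¹' {∞} with hN_def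
  have hZ0m : MeasurableSet (lam ⁻¹' {0}) := hlm (measurableSet_singleton 0)
  have hZim : MeasurableSet (lam ⁻¹' {∞}) := hlm (measurableSet_singleton ∞)
  have hNm : MeasurableSet N := hZ0m.union hZim
  have hμN : μ N = 0 := by
    refine measure_union_null ?_ ?_
    · refine habs2 ?_
      rw [← hwd, withDensity_apply _ hZ0m]
      have h0 : ∀ᵐ x ∂(μ.restrict (lam ⁻¹' {0})), lam x = 0 :=
        (ae_restrict_iff' hZ0m).2 (ae_of_all _ fun x hx => hx)
      rw [lintegral_congr_ae h0, lintegral_zero]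
    · have : ∀ᵐ x ∂μ, x ∉ lam ⁻¹' {∞} := by
        filter_upwards [hlfin] with x hx
        simp [hx.ne]
      exact measure_eq_zero_iff_ae_notMem.2 this
  -- disintegration of finite and null sets
  have hfin : ∀ T : Set X, MeasurableSet T → μ T < ∞ → ∀ᵐ c ∂ν, μC c T < ∞ := by
    intro T hTm hTf
    have hint : Integrable (T.indicator fun _ => (1 : ℂ)) μ :=
      (integrable_indicator_iff hTm).2 ((integrableOn_const_iff enorm_ne_top).2 (Or.inr hTf))
    filter_upwards [(hdis _ hint).1] with c hc
    have h2 := (integrable_indicator_iff hTm).1 hc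
    exact ((integrableOn_const_iff enorm_ne_top).1 h2).resolve_left (by simp)
  have hzero : ∀ T : Set X, MeasurableSet T → μ T = 0 → ∀ᵐ c ∂ν, μC c T = 0 := by
    intro T hTm hT0
    have hint : Integrable (T.indicator fun _ => (1 : ℂ)) μ :=
      (integrable_indicator_iff hTm).2 ((integrableOn_const_iff enorm_ne_top).2 (Or.inr (by simp [hT0])))
    obtain ⟨h1, h2, h3⟩ := hdis _ hint
    have hin : ∀ (m : Measure X), ∫ x, T.indicator (fun _ => (1 : ℂ)) x ∂m
        = ((m T).toReal : ℂ) := by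
      intro m
      rw [integral_indicator_const _ hTm, Complex.real_smul, mul_one]
      rfl
    have hμint : ∫ x, T.indicator (fun _ => (1 : ℂ)) x ∂μ = 0 := by
      rw [hin μ, hT0]; simp
    have hFeq : (fun c => ∫ x, T.indicator (fun _ => (1 : ℂ)) x ∂(μC c))
        = fun c => (((μC c) T).toReal : ℂ) := funext fun c => hin (μC c)
    have h2' : Integrable (fun c => (((μC c) T).toReal : ℂ)) ν := hFeq ▸ h2
    have hFint : Integrable (fun c => ((μC c) T).toReal) ν := by
      simpa using h2'.re
    have hFzero : ∫ c, ((μC c) T).toReal ∂ν = 0 := by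
      have hc : ∫ c, ((((μC c) T).toReal : ℝ) : ℂ) ∂ν = 0 := by
        rw [← hFeq, h3, hμint]
      have hc2 := (integral_ofReal (f := fun c => ((μC c) T).toReal)
        (μ := ν) (𝕜 := ℂ)).symm.trans hc
      exact RCLike.ofReal_eq_zero.1 hc2
    have hae0 := (integral_eq_zero_iff_of_nonneg
      (fun c => ENNReal.toReal_nonneg) hFint).1 hFzero
    filter_upwards [hae0, hfin T hTm (by rw [hT0]; exact ENNReal.zero_lt_top)] with c h0 hlt
    have h0' : ((μC c) T).toReal = 0 := h0
    rcases (ENNReal.toReal_eq_zero_iff _).1 h0' with h | h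
    · exact h
    · exact absurd h hlt.ne
  -- key identity on each generating set
  have key : ∀ s : Set X, MeasurableSet s → ∀ᵐ c ∂ν,
      (μC c).map f (s ∩ A) = (μC c).withDensity lam (s ∩ A) := by
    intro s hs
    set T : Set X := s ∩ A with hT_def
    have hTm : MeasurableSet T := hs.inter hA
    have hTK : f ⁻¹' T ⊆ K := fun x hx => hfiA hx.2
    set g1 : X → ℂ := (f ⁻¹' T).indicator (fun _ => (1 : ℂ)) with hg1_def
    set g2 : X → ℂ := T.indicator (fun x => ((lam x).toReal : ℂ)) with hg2_def
    have hT1 : MeasurableSet (f ⁻¹' T) := hfm hTm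
    have hμT1 : μ (f ⁻¹' T) < ∞ := lt_of_le_of_lt (measure_mono hTK) hμK
    have hg1i : Integrable g1 μ :=
      (integrable_indicator_iff hT1).2 ((integrableOn_const_iff enorm_ne_top).2 (Or.inr hμT1))
    have hwdT : ∀ U : Set X, MeasurableSet U → μ.withDensity lam U = μ (f ⁻¹' U) := by
      intro U hU; rw [hwd, Measure.map_apply hfm hU]
    have hlamT : Integrable (fun x => (lam x).toReal) (μ.restrict T) := by
      refine integrable_toReal_of_lintegral_ne_top hlm.aemeasurable ?_
      have : ∫⁻ x in T, lam x ∂μ = μ.withDensity lam T := (withDensity_apply _ hTm).symm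
      rw [this, hwdT T hTm]
      exact hμT1.ne
    have hg2i : Integrable g2 μ := (integrable_indicator_iff hTm).2 hlamT.ofReal
    have hSeq : ∀ S : Set Q, MeasurableSet S →
        ∫ x, (p ⁻¹' S).indicator g1 x ∂μ = ∫ x, (p ⁻¹' S).indicator g2 x ∂μ := by
      intro S hS
      have hpS : MeasurableSet (p ⁻¹' S) := hp_meas hS
      have h1 : (p ⁻¹' S).indicator g1
          = ((p ⁻¹' S) ∩ f ⁻¹' T).indicator (fun _ => (1 : ℂ)) := by
        rw [hg1_def, Set.indicator_indicator]
      have h2 : (p ⁻¹' S).indicator g2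
          = ((p ⁻¹' S) ∩ T).indicator (fun x => ((lam x).toReal : ℂ)) := by
        rw [hg2_def, Set.indicator_indicator]
      rw [h1, h2, integral_indicator_const _ (hpS.inter hT1),
        integral_indicator (hpS.inter hTm)]
      have h3 : ∫ x in (p ⁻¹' S) ∩ T, ((lam x).toReal : ℂ) ∂μ
          = ((∫ x in (p ⁻¹' S) ∩ T, (lam x).toReal ∂μ : ℝ) : ℂ) := integral_ofReal
      have h4 : ∫ x in (p ⁻¹' S) ∩ T, (lam x).toReal ∂μ
          = (μ ((p ⁻¹' S) ∩ f ⁻¹' T)).toReal := by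
        rw [integral_toReal hlm.aemeasurable.restrict (ae_restrict_of_ae hlfin)]
        congr 1
        have h5 : ∫⁻ x in (p ⁻¹' S) ∩ T, lam x ∂μ = μ.withDensity lam ((p ⁻¹' S) ∩ T) :=
          (withDensity_apply _ (hpS.inter hTm)).symm
        rw [h5, hwdT _ (hpS.inter hTm), preimage_inter, hpfpre]
      rw [h3, h4]
      simp [Complex.real_smul, Measure.real]
    have hsplit : ∀ (S : Set Q) (gg : X → ℂ) (c : Q),
        ∫ x, (p ⁻¹' S).indicator gg x ∂(μC c)
          = S.indicator (fun c' => ∫ x, gg x ∂(μC c')) c := by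
      intro S gg c
      have hae : ∀ᵐ x ∂(μC c), p x = c := by
        have h6 : ∀ᵐ x ∂(μC c), x ∈ p ⁻¹' {c} :=
          (ae_iff.2 (hconc c))
        filter_upwards [h6] with x hx using hx
      by_cases hc : c ∈ S
      · have h7 : (p ⁻¹' S).indicator gg =ᵐ[μC c] gg := by
          filter_upwards [hae] with x hx
          rw [Set.indicator_of_mem (by simp [Set.mem_preimage, hx, hc])]
        rw [integral_congr_ae h7, Set.indicator_of_mem hc]
      · have h7 : (p ⁻¹' S).indicator gg =ᵐ[μC c] 0 := by
          filter_upwards [hae] with x hx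
          rw [Set.indicator_of_notMem (by simp [Set.mem_preimage, hx, hc])]
          rfl
        rw [integral_congr_ae h7]
        simp [Set.indicator_of_notMem hc]
    have hphi := hdis g1 hg1i
    have hpsi := hdis g2 hg2i
    have haeq : (fun c => ∫ x, g1 x ∂(μC c)) =ᵐ[ν] (fun c => ∫ x, g2 x ∂(μC c)) := by
      refine ae_eq_of_forall_setIntegral_eq_of_sigmaFinite
        (fun S hS _ => hphi.2.1.integrableOn) (fun S hS _ => hpsi.2.1.integrableOn) ?_
      intro S hS _
      have e1 := (hdis _ (hg1i.indicator (hp_meas hS))).2.2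
      have e2 := (hdis _ (hg2i.indicator (hp_meas hS))).2.2
      rw [hSeq S hS] at e1
      have e3 : ∫ c, ∫ x, (p ⁻¹' S).indicator g1 x ∂(μC c) ∂ν
          = ∫ c, ∫ x, (p ⁻¹' S).indicator g2 x ∂(μC c) ∂ν := by rw [e1, e2]
      calc ∫ c in S, ∫ x, g1 x ∂(μC c) ∂ν
          = ∫ c, S.indicator (fun c' => ∫ x, g1 x ∂(μC c')) c ∂ν :=
            (integral_indicator hS).symm
        _ = ∫ c, ∫ x, (p ⁻¹' S).indicator g1 x ∂(μC c) ∂ν :=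
            (integral_congr_ae (ae_of_all _ fun c => (hsplit S g1 c).symm))
        _ = ∫ c, ∫ x, (p ⁻¹' S).indicator g2 x ∂(μC c) ∂ν := e3
        _ = ∫ c, S.indicator (fun c' => ∫ x, g2 x ∂(μC c')) c ∂ν :=
            (integral_congr_ae (ae_of_all _ fun c => hsplit S g2 c))
        _ = ∫ c in S, ∫ x, g2 x ∂(μC c) ∂ν := integral_indicator hS
    filter_upwards [haeq, hfin K hKm hμK, hzero N hNm hμN, hpsi.1] with c hphi2 hcK hcN hci2
    have hmapT : (μC c).map f T = μC c (f ⁻¹' T) := Measure.map_apply hfm hTm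
    have hfinT : (μC c).map f T < ∞ := by
      rw [hmapT]; exact lt_of_le_of_lt (measure_mono hTK) hcK
    have hlaminf : ∀ᵐ x ∂(μC c), lam x < ∞ := by
      have h8 : μC c (lam ⁻¹' {∞}) = 0 := measure_mono_null subset_union_right hcN
      have h9 : ∀ᵐ x ∂(μC c), x ∉ lam ⁻¹' {∞} := measure_eq_zero_iff_ae_notMem.1 h8
      filter_upwards [h9] with x hx
      simpa [lt_top_iff_ne_top] using hx
    have hphi1 : ∫ x, g1 x ∂(μC c) = ((((μC c).map f T).toReal : ℝ) : ℂ) := by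
      rw [hg1_def, integral_indicator_const _ hT1, hmapT]
      simp [Complex.real_smul, Measure.real]
    have hphi2' : ∫ x, g2 x ∂(μC c) = (((((μC c).withDensity lam) T).toReal : ℝ) : ℂ) := by
      rw [hg2_def, integral_indicator hTm]
      have h10 : ∫ x in T, ((lam x).toReal : ℂ) ∂(μC c)
          = ((∫ x in T, (lam x).toReal ∂(μC c) : ℝ) : ℂ) := integral_ofReal
      rw [h10]
      congr 1
      rw [integral_toReal hlm.aemeasurable.restrict (ae_restrict_of_ae hlaminf)]
      congr 1
      exact (withDensity_apply _ hTm).symm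
    have hwdfin : ((μC c).withDensity lam) T < ∞ := by
      have h6 : IntegrableOn (fun x => ((lam x).toReal : ℂ)) T (μC c) :=
        (integrable_indicator_iff hTm).1 hci2
      have h7 : Integrable (fun x => (lam x).toReal) ((μC c).restrict T) := by
        simpa using h6.re
      have h8 := h7.lintegral_lt_top
      rw [withDensity_apply _ hTm]
      have h9 : ∫⁻ x in T, lam x ∂(μC c)
          = ∫⁻ x in T, ENNReal.ofReal ((lam x).toReal) ∂(μC c) := by
        refine lintegral_congr_ae (ae_restrict_of_ae ?_)
        filter_upwards [hlaminf] with x hx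
        rw [ENNReal.ofReal_toReal hx.ne]
      rw [h9]; exact h8
    have hre : (((μC c).map f T).toReal : ℂ) = ((((μC c).withDensity lam) T).toReal : ℂ) := by
      rw [← hphi1, ← hphi2']; exact hphi2
    have hre2 : ((μC c).map f T).toReal = (((μC c).withDensity lam) T).toReal := by
      exact_mod_cast hre
    exact (ENNReal.toReal_eq_toReal_iff' hfinT.ne hwdfin.ne).1 hre2
  -- countable π-system
  set PS : Set (Set X) := generatePiSystem (MeasurableSpace.countableGeneratingSet X)
    with hPS_def
  have hPSc : PS.Countable :=
    countable_generatePiSystem'' MeasurableSpace.countable_countableGeneratingSet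
  have hPSpi : IsPiSystem PS := isPiSystem_generatePiSystem _
  have hPSgen : (inferInstance : MeasurableSpace X) = MeasurableSpace.generateFrom PS := by
    rw [hPS_def, generateFrom_generatePiSystem_eq,
      MeasurableSpace.generateFrom_countableGeneratingSet]
  have hPSmeas : ∀ s ∈ PS, MeasurableSet s := fun s hs =>
    generatePiSystem_measurableSet
      (fun u hu => MeasurableSpace.measurableSet_countableGeneratingSet hu) s hs
  have haeKey : ∀ᵐ c ∂ν, ∀ s ∈ PS,
      (μC c).map f (s ∩ A) = (μC c).withDensity lam (s ∩ A) :=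
    (ae_ball_iff hPSc).2 fun s hs => key s (hPSmeas s hs)
  have haeUniv := key univ MeasurableSet.univ
  have haeK := hfin K hKm hμK
  have haeN := hzero N hNm hμN
  have haeSig : ∀ᵐ c ∂ν, ∀ n, μC c (MeasureTheory.spanningSets μ n) < ∞ :=
    ae_all_iff.2 fun n => hfin _ (MeasureTheory.measurableSet_spanningSets μ n)
      (MeasureTheory.measure_spanningSets_lt_top μ n)
  filter_upwards [haeKey, haeUniv, haeK, haeN, haeSig] with c hkeyc hunivc hKc hNc hsigc
  intro _
  haveI hsf1 : SigmaFinite (μC c) := hsig_self _ hsigc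
  haveI hsf2 : SigmaFinite ((μC c).map f) := hsig_map _ hsigc
  rw [univ_inter] at hunivc
  have hfinA : (μC c).map f A < ∞ := by
    rw [Measure.map_apply hfm hA]
    exact lt_of_le_of_lt (measure_mono hfiA) hKc
  haveI : IsFiniteMeasure (((μC c).map f).restrict A) :=
    ⟨by rwa [Measure.restrict_apply_univ]⟩
  haveI : IsFiniteMeasure (((μC c).withDensity lam).restrict A) :=
    ⟨by rw [Measure.restrict_apply_univ, ← hunivc]; exact hfinA⟩
  have hres : ((μC c).map f).restrict A = ((μC c).withDensity lam).restrict A := by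
    refine MeasureTheory.ext_of_generate_finite PS hPSgen hPSpi ?_ ?_
    · intro s hs
      rw [Measure.restrict_apply (hPSmeas s hs), Measure.restrict_apply (hPSmeas s hs)]
      exact hkeyc s hs
    · rw [Measure.restrict_apply_univ, Measure.restrict_apply_univ]; exact hunivc
  have hNc0 : μC c (lam ⁻¹' {0}) = 0 := measure_mono_null subset_union_left hNc
  refine ⟨⟨?_, ?_⟩, ?_⟩
  · rw [hres, restrict_withDensity hA]
    exact withDensity_absolutelyContinuous _ _
  · rw [hres, restrict_withDensity hA]
    refine Measure.AbsolutelyContinuous.mk ?_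
    intro E hE h0
    rw [withDensity_apply _ hE] at h0
    have hlam0ae : ∀ᵐ x ∂((μC c).restrict A), x ∈ E → lam x = 0 :=
      (setLIntegral_eq_zero_iff hE hlm).1 h0
    have hlamne : ∀ᵐ x ∂((μC c).restrict A), lam x ≠ 0 := by
      have hz : (μC c).restrict A (lam ⁻¹' {0}) = 0 :=
        le_antisymm (le_trans (Measure.restrict_apply_le _ _) hNc0.le) zero_le
      have := measure_eq_zero_iff_ae_notMem.1 hz
      filter_upwards [this] with x hx
      simpa using hx
    have hnm : ∀ᵐ x ∂((μC c).restrict A), x ∉ E := by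
      filter_upwards [hlam0ae, hlamne] with x h1 h2 hxE
      exact h2 (h1 hxE)
    exact measure_eq_zero_iff_ae_notMem.2 hnm
  · have e1 := Measure.rnDeriv_restrict ((μC c).map f) (μC c) hA
    have e2 : ((μC c).map f).restrict A = (μC c).withDensity (A.indicator lam) := by
      rw [hres, restrict_withDensity hA, ← withDensity_indicator hA]
    have e3 := Measure.rnDeriv_withDensity (μC c) (hlm.indicator hA)
    rw [← e2] at e3
    have e4 : A.indicator (((μC c).map f).rnDeriv (μC c)) =ᵐ[μC c] A.indicator lam :=
      e1.symm.trans e3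
    refine (ae_restrict_iff' hA).2 ?_
    filter_upwards [e4] with x hx hxA
    have hx2 := hx
    rwa [Set.indicator_of_mem hxA, Set.indicator_of_mem hxA] at hx2
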